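/- Let n ≥ 1 and α, β̃ ∈ ℂⁿ. Let Ψ and Φ be n×n matrices over ℂ((z)) with Ψ·Φ = Φ·Ψ = 1, where Ψ has order ≥ 0, Φ has order ≥ −1 with Φ_{−1} = α·β̃ᵀ, and Ψ₀·α = 0. Let h be a diagonal n×n matrix over ℂ((z)) of order ≥ 0. Then L := Φ·h·Ψ has order ≥ −1 and there exist β ∈ ℂⁿ and κ ∈ ℂ such that L_{−1} = α·βᵀ, βᵀα = 0, and L_0·α = κ·α. (This is the gl(n) case of the Lemma: for any h in the commutative Krichever-Novikov current algebra, Ψ⁻¹hΨ lies in the Lax operator algebra — localized at a Tyurin point γ.) -/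
import Mathlib


open Matrix

/-- The matrix of `z^k`-coefficients of a matrix of formal Laurent series. -/
noncomputable def coeffM {n : ℕ} (A : Matrix (Fin n) (Fin n) (LaurentSeries ℂ)) (k : ℤ) :
    Matrix (Fin n) (Fin n) ℂ :=
  fun i j => (A i j).coeff k

/-- `A` has order `≥ m`: all coefficients below `m` vanish. -/
def ordGE {n : ℕ} (A : Matrix (Fin n) (Fin n) (LaurentSeries ℂ)) (m : ℤ) : Prop :=
  ∀ k : ℤ, k < m → coeffM A k = 0

lemma coeff_finsum {ι : Type*} (s : Finset ι) (f : ι → LaurentSeries ℂ) (k : ℤ) :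
    (∑ i ∈ s, f i).coeff k = ∑ i ∈ s, (f i).coeff k := by
  classical
  induction s using Finset.cons_induction with
  | empty => simp
  | cons a s ha ih => simp [Finset.sum_insert ha, HahnSeries.coeff_add, ih]

/-- Coefficient of a product of Laurent series with lower bounds on orders,
as a finite sum over an interval. -/
lemma coeff_mul_Icc (f g : LaurentSeries ℂ) (a b : ℤ)
    (hf : ∀ i < a, f.coeff i = 0) (hg : ∀ j < b, g.coeff j = 0) (k : ℤ) :
    (f * g).coeff k = ∑ i ∈ Finset.Icc a (k - b), f.coeff i * g.coeff (k - i) := by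
  classical
  rw [HahnSeries.coeff_mul]
  have himg : ∑ ij ∈ (Finset.Icc a (k - b)).image (fun i : ℤ => ((i, k - i) : ℤ × ℤ)),
      f.coeff ij.1 * g.coeff ij.2 = ∑ i ∈ Finset.Icc a (k - b), f.coeff i * g.coeff (k - i) :=
    Finset.sum_image (by intro x _ y _ hxy; exact (Prod.mk.injEq _ _ _ _ ▸ hxy).1)
  rw [← himg]
  refine Finset.sum_subset ?_ ?_
  · intro ij hij
    rw [Finset.mem_addAntidiagonal] at hij
    obtain ⟨h1, h2, h3⟩ := hij
    simp only [Finset.mem_image, Finset.mem_Icc]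
    refine ⟨ij.1, ⟨?_, ?_⟩, ?_⟩
    · by_contra hlt
      exact h1 (hf _ (lt_of_not_ge hlt))
    · have hb : b ≤ ij.2 := by
        by_contra hlt
        exact h2 (hg _ (lt_of_not_ge hlt))
      omega
    · have : ij.2 = k - ij.1 := by omega
      rw [← this]
  · intro ij hij hnot
    simp only [Finset.mem_image, Finset.mem_Icc] at hij
    obtain ⟨i, ⟨hia, hib⟩, rfl⟩ := hij
    rw [Finset.mem_addAntidiagonal] at hnot
    by_contra hne
    apply hnot
    refine ⟨?_, ?_, by omega⟩
    · intro h0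
      exact hne (by simp [h0])
    · intro h0
      exact hne (by simp [h0])

lemma coeffM_mul {n : ℕ} (A B : Matrix (Fin n) (Fin n) (LaurentSeries ℂ)) (a b : ℤ)
    (hA : ordGE A a) (hB : ordGE B b) (k : ℤ) :
    coeffM (A * B) k = ∑ i ∈ Finset.Icc a (k - b), coeffM A i * coeffM B (k - i) := by
  classical
  ext p q
  have hA' : ∀ i < a, ∀ p q, (A p q).coeff i = 0 := fun i hi p q =>
    congrFun (congrFun (hA i hi) p) q
  have hB' : ∀ j < b, ∀ p q, (B p q).coeff j = 0 := fun j hj p q =>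
    congrFun (congrFun (hB j hj) p) q
  simp only [coeffM, Matrix.mul_apply, Matrix.sum_apply, coeff_finsum]
  rw [Finset.sum_congr rfl fun l (_ : l ∈ Finset.univ) =>
    coeff_mul_Icc (A p l) (B l q) a b (fun i hi => hA' i hi p l) (fun j hj => hB' j hj l q) k,
    Finset.sum_comm]

lemma vecMulVec_mul {n : ℕ} (a b : Fin n → ℂ) (M : Matrix (Fin n) (Fin n) ℂ) :
    vecMulVec a b * M = vecMulVec a (b ᵥ* M) := by
  ext i j
  simp [vecMulVec, Matrix.mul_apply, Matrix.vecMul, dotProduct, Finset.mul_sum, mul_assoc]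

lemma vecMulVec_mulVec' {n : ℕ} (a b v : Fin n → ℂ) :
    (vecMulVec a b) *ᵥ v = (b ⬝ᵥ v) • a := by
  ext i
  simp only [vecMulVec, Matrix.mulVec, dotProduct, Matrix.of_apply,
    Pi.smul_apply, smul_eq_mul, Finset.sum_mul]
  exact Finset.sum_congr rfl fun j _ => by ring

/-- The `gl(n)` case of the Lemma: for any diagonal `h`, the matrix `Ψ⁻¹hΨ` lies in
the Lax operator algebra, localized at a Tyurin point. -/
theorem conjugated_diagonal_is_lax_gl (n : ℕ) (hn : 1 ≤ n)
    (α βt : Fin n → ℂ)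
    (Ψ Φ : Matrix (Fin n) (Fin n) (LaurentSeries ℂ))
    (hΨΦ : Ψ * Φ = 1) (hΦΨ : Φ * Ψ = 1)
    (hΨord : ordGE Ψ 0)
    (hΦord : ordGE Φ (-1)) (hΦm1 : coeffM Φ (-1) = vecMulVec α βt)
    (hΨ₀α : (coeffM Ψ 0).mulVec α = 0)
    (h : Matrix (Fin n) (Fin n) (LaurentSeries ℂ))
    (hhord : ordGE h 0) (hhdiag : ∀ k : ℤ, (coeffM h k).IsDiag) :
    ordGE (Φ * h * Ψ) (-1) ∧
    ∃ (β : Fin n → ℂ) (κ : ℂ),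
      coeffM (Φ * h * Ψ) (-1) = vecMulVec α β ∧
      β ⬝ᵥ α = 0 ∧
      (coeffM (Φ * h * Ψ) 0).mulVec α = κ • α := by
  classical
  -- order of Φ * h
  have hΦh : ordGE (Φ * h) (-1) := by
    intro k hk
    rw [coeffM_mul Φ h (-1) 0 hΦord hhord, Finset.Icc_eq_empty (by omega), Finset.sum_empty]
  have hL : ordGE (Φ * h * Ψ) (-1) := by
    intro k hk
    rw [coeffM_mul (Φ * h) Ψ (-1) 0 hΦh hΨord, Finset.Icc_eq_empty (by omega),
      Finset.sum_empty]
  refine ⟨hL, ?_⟩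
  have hΦhm1 : coeffM (Φ * h) (-1) = vecMulVec α βt * coeffM h 0 := by
    rw [coeffM_mul Φ h (-1) 0 hΦord hhord]
    have : Finset.Icc (-1 : ℤ) ((-1 : ℤ) - 0) = {(-1 : ℤ)} := by decide
    rw [this, Finset.sum_singleton, hΦm1]
    norm_num
  have hΦh0 : coeffM (Φ * h) 0 =
      vecMulVec α βt * coeffM h 1 + coeffM Φ 0 * coeffM h 0 := by
    rw [coeffM_mul Φ h (-1) 0 hΦord hhord]
    have : Finset.Icc (-1 : ℤ) ((0 : ℤ) - 0) = {-1, 0} := by decide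
    rw [this, Finset.sum_insert (by decide), Finset.sum_singleton, hΦm1]
    norm_num
  have hLm1 : coeffM (Φ * h * Ψ) (-1) =
      vecMulVec α βt * coeffM h 0 * coeffM Ψ 0 := by
    rw [coeffM_mul (Φ * h) Ψ (-1) 0 hΦh hΨord]
    have : Finset.Icc (-1 : ℤ) ((-1 : ℤ) - 0) = {(-1 : ℤ)} := by decide
    rw [this, Finset.sum_singleton, hΦhm1]
    norm_num
  have hL0 : coeffM (Φ * h * Ψ) 0 =
      vecMulVec α βt * coeffM h 0 * coeffM Ψ 1 + coeffM (Φ * h) 0 * coeffM Ψ 0 := by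
    rw [coeffM_mul (Φ * h) Ψ (-1) 0 hΦh hΨord]
    have : Finset.Icc (-1 : ℤ) ((0 : ℤ) - 0) = {-1, 0} := by decide
    rw [this, Finset.sum_insert (by decide), Finset.sum_singleton, hΦhm1]
    norm_num
  refine ⟨βt ᵥ* coeffM h 0 ᵥ* coeffM Ψ 0,
    (βt ᵥ* coeffM h 0 ᵥ* coeffM Ψ 1) ⬝ᵥ α, ?_, ?_, ?_⟩
  · rw [hLm1, vecMulVec_mul, vecMulVec_mul]
  · rw [← Matrix.dotProduct_mulVec, ← Matrix.dotProduct_mulVec, hΨ₀α,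
      Matrix.mulVec_zero, dotProduct_zero]
  · have h2 : (coeffM (Φ * h) 0 * coeffM Ψ 0) *ᵥ α = 0 := by
      rw [← Matrix.mulVec_mulVec, hΨ₀α, Matrix.mulVec_zero]
    have h1 : (vecMulVec α βt * coeffM h 0 * coeffM Ψ 1) *ᵥ α
        = ((βt ᵥ* coeffM h 0 ᵥ* coeffM Ψ 1) ⬝ᵥ α) • α := by
      rw [vecMulVec_mul, vecMulVec_mul, vecMulVec_mulVec']
    rw [hL0, Matrix.add_mulVec, h1, h2, add_zero]
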